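/- Let p be an odd prime, F a field of characteristic p, and a, b ∈ F. Consider the polynomial f(x) = b - ∑_{t=1}^{p-1} (-1)^{t-1} t^{-1} ( x^{tp} a^{p-t} + (a + x^p)^t (-x)^{p-t} ) in F[x], where t^{-1} denotes the inverse of t in F. Then f has degree exactly p^2 - p + 1, and its leading coefficient is a unit (in fact ±1). -/
import Mathlib

open Polynomial Finset

theorem stmt7 (p : ℕ) [Fact p.Prime] (hodd : Odd p) {F : Type*} [Field F] [CharP F p]
    (a b : F) :
    (Polynomial.C b - ∑ t ∈ Finset.Icc 1 (p - 1),
        Polynomial.C ((-1 : F) ^ (t - 1) * (t : F)⁻¹) *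
          (Polynomial.X ^ (t * p) * Polynomial.C (a ^ (p - t)) +
            (Polynomial.C a + Polynomial.X ^ p) ^ t * (-Polynomial.X) ^ (p - t))).natDegree =
        p ^ 2 - p + 1 ∧
    ((Polynomial.C b - ∑ t ∈ Finset.Icc 1 (p - 1),
        Polynomial.C ((-1 : F) ^ (t - 1) * (t : F)⁻¹) *
          (Polynomial.X ^ (t * p) * Polynomial.C (a ^ (p - t)) +
            (Polynomial.C a + Polynomial.X ^ p) ^ t * (-Polynomial.X) ^ (p - t))).leadingCoeff = 1 ∨
     (Polynomial.C b - ∑ t ∈ Finset.Icc 1 (p - 1),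
        Polynomial.C ((-1 : F) ^ (t - 1) * (t : F)⁻¹) *
          (Polynomial.X ^ (t * p) * Polynomial.C (a ^ (p - t)) +
            (Polynomial.C a + Polynomial.X ^ p) ^ t * (-Polynomial.X) ^ (p - t))).leadingCoeff = -1) := by
  have hp : p.Prime := Fact.out
  have hp2 : 2 ≤ p := hp.two_le
  have hp3 : 3 ≤ p := by
    obtain ⟨k, hk⟩ := hodd; omega
  set N : ℕ := (p - 1) * p + 1 with hNdef
  have hNeq : p ^ 2 - p + 1 = N := by
    have : (p - 1) * p = p * p - p := by rw [Nat.sub_mul, one_mul]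
    have hpp : p ≤ p * p := Nat.le_mul_of_pos_left p (by omega)
    simp only [hNdef, this, pow_two]
  set g : ℕ → F[X] := fun t =>
    Polynomial.C ((-1 : F) ^ (t - 1) * (t : F)⁻¹) *
      (Polynomial.X ^ (t * p) * Polynomial.C (a ^ (p - t)) +
        (Polynomial.C a + Polynomial.X ^ p) ^ t * (-Polynomial.X) ^ (p - t)) with hg
  set f : F[X] := Polynomial.C b - ∑ t ∈ Finset.Icc 1 (p - 1), g t with hf
  -- degree bound for each summand
  have hbound : ∀ t, (g t).natDegree ≤ max (t * p) (t * p + (p - t)) := by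
    intro t
    refine (natDegree_mul_le).trans ?_
    rw [natDegree_C, zero_add]
    refine (natDegree_add_le _ _).trans ?_
    gcongr
    · exact (natDegree_mul_le).trans (by simp)
    · refine (natDegree_mul_le).trans ?_
      gcongr
      · refine (natDegree_pow_le).trans ?_
        have : (Polynomial.C a + Polynomial.X ^ p : F[X]).natDegree = p := by
          rw [add_comm, natDegree_X_pow_add_C]
        rw [this]
      · refine (natDegree_pow_le).trans ?_
        simp
  have harith : ∀ t, 1 ≤ t → t ≤ p - 1 →
      max (t * p) (t * p + (p - t)) ≤ N ∧ (t ≠ p - 1 → max (t * p) (t * p + (p - t)) < N) := by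
    intro t h1 h2
    rcases eq_or_ne t (p - 1) with rfl | hne
    · refine ⟨?_, fun h => absurd rfl h⟩
      have : p - (p - 1) = 1 := by omega
      simp [this, hNdef]
    · obtain ⟨q, rfl⟩ : ∃ q, p = q + 3 := ⟨p - 3, by omega⟩
      have hm : t * (q + 3) ≤ (q + 1) * (q + 3) := Nat.mul_le_mul_right _ (by omega)
      have hs : q + 3 - t ≤ q + 2 := by omega
      have hkey : (q + 1) * (q + 3) + (q + 2) < (q + 2) * (q + 3) + 1 := by nlinarith
      have hNq : N = (q + 2) * (q + 3) + 1 := by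
        have h21 : q + 3 - 1 = q + 2 := by omega
        rw [hNdef, h21]
      have hlt : max (t * (q + 3)) (t * (q + 3) + (q + 3 - t)) < N := by
        rw [hNq]
        refine max_lt ?_ ?_
        · exact lt_of_le_of_lt hm (by nlinarith)
        · exact lt_of_le_of_lt (add_le_add hm hs) hkey
      exact ⟨hlt.le, fun _ => hlt⟩
  have hdegle : ∀ t ∈ Finset.Icc 1 (p - 1), (g t).natDegree ≤ N := by
    intro t ht
    rw [Finset.mem_Icc] at ht
    exact (hbound t).trans (harith t ht.1 ht.2).1
  have hfle : f.natDegree ≤ N := by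
    refine (natDegree_sub_le _ _).trans ?_
    refine max_le (by simp) ?_
    exact natDegree_sum_le_of_forall_le _ _ hdegle
  -- the coefficient at N
  have hmonicbase : (Polynomial.C a + Polynomial.X ^ p : F[X]).Monic := by
    rw [add_comm]; exact monic_X_pow_add_C a (by omega)
  have hmonic : ((Polynomial.C a + Polynomial.X ^ p : F[X]) ^ (p - 1)).Monic :=
    hmonicbase.pow _
  have hdegpow : ((Polynomial.C a + Polynomial.X ^ p : F[X]) ^ (p - 1)).natDegree
      = (p - 1) * p := by
    rw [hmonicbase.natDegree_pow, add_comm, natDegree_X_pow_add_C]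
  have hcoefftop : (g (p - 1)).coeff N = -1 := by
    have hps : p - (p - 1) = 1 := by omega
    have hc1 : ((-1 : F) ^ (p - 1 - 1) * ((p - 1 : ℕ) : F)⁻¹) = 1 := by
      have hcast : ((p - 1 : ℕ) : F) = -1 := by
        rw [Nat.cast_sub (by omega), Nat.cast_one, CharP.cast_eq_zero F p]
        ring
      have hoddexp : Odd (p - 1 - 1) := by
        obtain ⟨k, hk⟩ := hodd
        exact ⟨k - 1, by omega⟩
      rw [hcast, hoddexp.neg_one_pow]
      norm_num
    rw [hg]
    simp only [hc1, hps, pow_one, Polynomial.C_1, one_mul]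
    rw [Polynomial.coeff_add]
    have h1 : (Polynomial.X ^ ((p - 1) * p) * Polynomial.C a : F[X]).coeff N = 0 := by
      apply Polynomial.coeff_eq_zero_of_natDegree_lt
      have hdle : (Polynomial.X ^ ((p - 1) * p) * Polynomial.C a : F[X]).natDegree
          ≤ (p - 1) * p := natDegree_mul_le.trans (by simp)
      exact lt_of_le_of_lt hdle (Nat.lt_succ_self _)
    have h2 : ((Polynomial.C a + Polynomial.X ^ p : F[X]) ^ (p - 1) * -Polynomial.X).coeff N
        = -1 := by
      rw [mul_neg, Polynomial.coeff_neg, hNdef, Polynomial.coeff_mul_X]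
      rw [← hdegpow, hmonic.coeff_natDegree]
    rw [h1, h2, zero_add]
  have hcoeffN : f.coeff N = 1 := by
    rw [hf, Polynomial.coeff_sub, Polynomial.finset_sum_coeff]
    have hCb : (Polynomial.C b : F[X]).coeff N = 0 := by
      rw [Polynomial.coeff_C, if_neg (by omega)]
    have hsum : ∑ t ∈ Finset.Icc 1 (p - 1), (g t).coeff N = -1 := by
      rw [Finset.sum_eq_single_of_mem (p - 1) (Finset.mem_Icc.mpr ⟨by omega, le_refl _⟩)]
      · exact hcoefftop
      · intro t ht hne
        rw [Finset.mem_Icc] at ht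
        apply Polynomial.coeff_eq_zero_of_natDegree_lt
        exact lt_of_le_of_lt (hbound t) ((harith t ht.1 ht.2).2 hne)
    rw [hCb, hsum]
    ring
  have hne : f.coeff N ≠ 0 := by rw [hcoeffN]; exact one_ne_zero
  have hdeg : f.natDegree = N := le_antisymm hfle (Polynomial.le_natDegree_of_ne_zero hne)
  refine ⟨by rw [hNeq, hdeg], Or.inl ?_⟩
  rw [Polynomial.leadingCoeff, hdeg, hcoeffN]
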